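/- Front-door adjustment for functional causal models: in the front-door functional model, for all x in 𝒳 and y in 𝒴, P(Y_x = y) = sum over w of P(W = w | X = x) times [ sum over x' of P(Y = y | W = w, X = x') times P(X = x') ]. -/

import Mathlib

/-!
Front-door functional causal model: independent noises `u ~ muU`, `e_X ~ muEX`,
`e_W ~ muEW`, `e_Y ~ muEY`; `X := gX (u, e_X)`, `W := gW (X, e_W)`, `Y := gY (W, u, e_Y)`;
under `do(X = x)`, `Y_x := gY (gW (x, e_W), u, e_Y)`.
STATEMENT 6: assuming `P(X = x', W = w) > 0` for all `x', w`, for all `x, y`,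
`P(Y_x = y) = ∑ w, P(W = w | X = x) * ∑ x', P(Y = y | W = w, X = x') * P(X = x')`.
-/

open scoped ENNReal

/-- Observational joint law of `(X, W, Y)` in the front-door functional model. -/
noncomputable def fdObs {𝒰 EX EW EY 𝒳 𝒲 𝒴 : Type}
    (muU : PMF 𝒰) (muEX : PMF EX) (muEW : PMF EW) (muEY : PMF EY)
    (gX : 𝒰 × EX → 𝒳) (gW : 𝒳 × EW → 𝒲) (gY : 𝒲 × 𝒰 × EY → 𝒴) :
    PMF (𝒳 × 𝒲 × 𝒴) := do
  let u ← muU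
  let ex ← muEX
  let ew ← muEW
  let ey ← muEY
  let x := gX (u, ex)
  let w := gW (x, ew)
  pure (x, w, gY (w, u, ey))

/-- Interventional law of `Y_x` under `do(X = x)` in the front-door functional model. -/
noncomputable def fdDo {𝒰 EW EY 𝒳 𝒲 𝒴 : Type}
    (muU : PMF 𝒰) (muEW : PMF EW) (muEY : PMF EY)
    (gW : 𝒳 × EW → 𝒲) (gY : 𝒲 × 𝒰 × EY → 𝒴) (x : 𝒳) : PMF 𝒴 := do
  let u ← muU
  let ew ← muEW
  let ey ← muEY
  pure (gY (gW (x, ew), u, ey))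

section Aux

open scoped Classical

set_option linter.unusedSectionVars false

variable {𝒰 EX EW EY 𝒳 𝒲 𝒴 : Type}
    [Fintype 𝒰] [Fintype EX] [Fintype EW] [Fintype EY] [Fintype 𝒳] [Fintype 𝒲] [Fintype 𝒴]
    (muU : PMF 𝒰) (muEX : PMF EX) (muEW : PMF EW) (muEY : PMF EY)
    (gX : 𝒰 × EX → 𝒳) (gW : 𝒳 × EW → 𝒲) (gY : 𝒲 × 𝒰 × EY → 𝒴)

noncomputable def fdaX (u : 𝒰) (x' : 𝒳) : ℝ≥0∞ :=
  ∑ ex, muEX ex * (if x' = gX (u, ex) then 1 else 0)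

noncomputable def fdq (x' : 𝒳) (w : 𝒲) : ℝ≥0∞ :=
  ∑ ew, muEW ew * (if w = gW (x', ew) then 1 else 0)

noncomputable def fdr (w : 𝒲) (u : 𝒰) (y : 𝒴) : ℝ≥0∞ :=
  ∑ ey, muEY ey * (if y = gY (w, u, ey) then 1 else 0)

noncomputable def fdA (x' : 𝒳) : ℝ≥0∞ := ∑ u, muU u * fdaX muEX gX u x'

noncomputable def fdT (x' : 𝒳) (w : 𝒲) (y : 𝒴) : ℝ≥0∞ :=
  ∑ u, muU u * fdaX muEX gX u x' * fdr muEY gY w u y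

lemma fdsum_aX (u : 𝒰) : ∑ x', fdaX muEX gX u x' = 1 := by
  unfold fdaX
  rw [Finset.sum_comm]
  have h1 : ∀ ex : EX, ∑ x' : 𝒳, muEX ex * (if x' = gX (u, ex) then (1:ℝ≥0∞) else 0)
      = muEX ex := by
    intro ex
    rw [← Finset.mul_sum]
    simp [Finset.sum_ite_eq']
  rw [Finset.sum_congr rfl fun ex _ => h1 ex, ← tsum_fintype (L := .unconditional _)]
  exact muEX.tsum_coe

lemma fdsum_EW : ∑ ew, muEW ew = 1 := by rw [← tsum_fintype (L := .unconditional _)]; exact muEW.tsum_coe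
lemma fdsum_EY : ∑ ey, muEY ey = 1 := by rw [← tsum_fintype (L := .unconditional _)]; exact muEY.tsum_coe

lemma fdObs_apply (x' : 𝒳) (w : 𝒲) (y : 𝒴) :
    fdObs muU muEX muEW muEY gX gW gY (x', w, y)
      = fdq muEW gW x' w * fdT muU muEX muEY gX gY x' w y := by
  simp only [fdObs, PMF.bind_apply, PMF.pure_apply, tsum_fintype, bind, pure]
  unfold fdT
  rw [Finset.mul_sum]
  refine Finset.sum_congr rfl fun u _ => ?_
  have key : ∀ (ex : EX) (ew : EW) (ey : EY)
      (inst : Decidable ((x', w, y) = (gX (u, ex), gW (gX (u, ex), ew), gY (gW (gX (u, ex), ew), u, ey)))),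
      (@ite ℝ≥0∞ ((x', w, y) = (gX (u, ex), gW (gX (u, ex), ew), gY (gW (gX (u, ex), ew), u, ey))) inst 1 0)
      = (if x' = gX (u, ex) then 1 else 0) * (if w = gW (x', ew) then 1 else 0)
          * (if y = gY (w, u, ey) then 1 else 0) := by
    intro ex ew ey inst
    by_cases h1 : x' = gX (u, ex)
    · by_cases h2 : w = gW (x', ew)
      · by_cases h3 : y = gY (w, u, ey)
        · simp [← h1, ← h2, ← h3]
        · simp [← h1, ← h2, h3, Prod.ext_iff]
      · simp [← h1, h2, Prod.ext_iff]
    · simp [h1, Prod.ext_iff]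
  simp only [key]
  have step1 : ∀ (ex : EX) (ew : EW),
      (∑ ey, muEY ey *
        ((if x' = gX (u, ex) then (1:ℝ≥0∞) else 0) * (if w = gW (x', ew) then 1 else 0)
          * (if y = gY (w, u, ey) then 1 else 0)))
      = ((if x' = gX (u, ex) then 1 else 0) * (if w = gW (x', ew) then 1 else 0))
          * fdr muEY gY w u y := by
    intro ex ew
    unfold fdr
    rw [Finset.mul_sum]
    exact Finset.sum_congr rfl fun ey _ => by ring
  simp only [step1]
  have step2 : ∀ ex : EX,
      (∑ ew, muEW ew * ((if x' = gX (u, ex) then (1:ℝ≥0∞) else 0)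
          * (if w = gW (x', ew) then 1 else 0) * fdr muEY gY w u y))
      = (if x' = gX (u, ex) then 1 else 0) * fdq muEW gW x' w * fdr muEY gY w u y := by
    intro ex
    unfold fdq
    simp only [Finset.mul_sum, Finset.sum_mul]
    exact Finset.sum_congr rfl fun ew _ => by ring
  simp only [step2]
  unfold fdaX
  rw [Finset.mul_sum]
  simp only [Finset.mul_sum, Finset.sum_mul]
  exact Finset.sum_congr rfl fun ex _ => by ring

lemma fdObsXW_apply (x' : 𝒳) (w : 𝒲) :
    (fdObs muU muEX muEW muEY gX gW gY).map (fun v => (v.1, v.2.1)) (x', w)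
      = fdA muU muEX gX x' * fdq muEW gW x' w := by
  simp only [PMF.map, fdObs, PMF.bind_bind, PMF.pure_bind, Function.comp,
    PMF.bind_apply, PMF.pure_apply, tsum_fintype, bind, pure]
  unfold fdA
  rw [Finset.sum_mul]
  refine Finset.sum_congr rfl fun u _ => ?_
  have key : ∀ (ex : EX) (ew : EW)
      (inst : Decidable ((x', w) = (gX (u, ex), gW (gX (u, ex), ew)))),
      (@ite ℝ≥0∞ ((x', w) = (gX (u, ex), gW (gX (u, ex), ew))) inst 1 0)
      = (if x' = gX (u, ex) then 1 else 0) * (if w = gW (x', ew) then 1 else 0) := by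
    intro ex ew inst
    by_cases h1 : x' = gX (u, ex)
    · by_cases h2 : w = gW (x', ew)
      · simp [← h1, ← h2]
      · simp [← h1, h2, Prod.ext_iff]
    · simp [h1, Prod.ext_iff]
  simp only [key]
  have step1 : ∀ (ex : EX) (ew : EW),
      (∑ ey, muEY ey *
        ((if x' = gX (u, ex) then (1:ℝ≥0∞) else 0) * (if w = gW (x', ew) then 1 else 0)))
      = (if x' = gX (u, ex) then 1 else 0) * (if w = gW (x', ew) then 1 else 0) := by
    intro ex ew
    rw [← Finset.sum_mul, fdsum_EY, one_mul]
  simp only [step1]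
  have step2 : ∀ ex : EX,
      (∑ ew, muEW ew * ((if x' = gX (u, ex) then (1:ℝ≥0∞) else 0)
          * (if w = gW (x', ew) then 1 else 0)))
      = (if x' = gX (u, ex) then 1 else 0) * fdq muEW gW x' w := by
    intro ex
    unfold fdq
    simp only [Finset.mul_sum, Finset.sum_mul]
    exact Finset.sum_congr rfl fun ew _ => by ring
  simp only [step2]
  unfold fdaX
  rw [Finset.mul_sum]
  simp only [Finset.mul_sum, Finset.sum_mul]
  exact Finset.sum_congr rfl fun ex _ => by ring

lemma fdObsX_apply (x' : 𝒳) :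
    (fdObs muU muEX muEW muEY gX gW gY).map (fun v => v.1) x' = fdA muU muEX gX x' := by
  simp only [PMF.map, fdObs, PMF.bind_bind, PMF.pure_bind, Function.comp,
    PMF.bind_apply, PMF.pure_apply, tsum_fintype, bind, pure]
  unfold fdA
  refine Finset.sum_congr rfl fun u _ => ?_
  have step1 : ∀ ex : EX,
      (∑ ey, muEY ey * (if x' = gX (u, ex) then (1:ℝ≥0∞) else 0))
      = (if x' = gX (u, ex) then 1 else 0) := by
    intro ex
    rw [← Finset.sum_mul, fdsum_EY, one_mul]
  have step2 : ∀ ex : EX,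
      (∑ ew, muEW ew * (if x' = gX (u, ex) then (1:ℝ≥0∞) else 0))
      = (if x' = gX (u, ex) then 1 else 0) := by
    intro ex
    rw [← Finset.sum_mul, fdsum_EW, one_mul]
  simp only [step1, step2]
  rfl

lemma fdDo_apply (x : 𝒳) (y : 𝒴) :
    fdDo muU muEW muEY gW gY x y
      = ∑ w, fdq muEW gW x w * ∑ u, muU u * fdr muEY gY w u y := by
  simp only [fdDo, PMF.bind_apply, PMF.pure_apply, tsum_fintype, bind, pure]
  have hr : ∀ (u : 𝒰) (ew : EW),
      (∑ ey, muEY ey * (if y = gY (gW (x, ew), u, ey) then (1:ℝ≥0∞) else 0))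
      = fdr muEY gY (gW (x, ew)) u y := fun _ _ => rfl
  simp only [hr]
  have hpick : ∀ (u : 𝒰) (ew : EW),
      fdr muEY gY (gW (x, ew)) u y
      = ∑ w, (if w = gW (x, ew) then (1:ℝ≥0∞) else 0) * fdr muEY gY w u y := by
    intro u ew
    symm
    simp only [ite_mul, one_mul, zero_mul]
    rw [Finset.sum_ite_eq']
    simp
  simp only [hpick]
  calc (∑ u, muU u * ∑ ew, muEW ew *
          ∑ w, (if w = gW (x, ew) then (1:ℝ≥0∞) else 0) * fdr muEY gY w u y)
      = ∑ u, ∑ ew, ∑ w, muU u * (muEW ew *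
          ((if w = gW (x, ew) then (1:ℝ≥0∞) else 0) * fdr muEY gY w u y)) := by
        simp only [Finset.mul_sum]
    _ = ∑ u, ∑ w, ∑ ew, muU u * (muEW ew *
          ((if w = gW (x, ew) then (1:ℝ≥0∞) else 0) * fdr muEY gY w u y)) :=
        Finset.sum_congr rfl fun u _ => Finset.sum_comm
    _ = ∑ w, ∑ u, ∑ ew, muU u * (muEW ew *
          ((if w = gW (x, ew) then (1:ℝ≥0∞) else 0) * fdr muEY gY w u y)) :=
        Finset.sum_comm
    _ = ∑ w, fdq muEW gW x w * ∑ u, muU u * fdr muEY gY w u y := by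
        refine Finset.sum_congr rfl fun w _ => ?_
        unfold fdq
        simp only [Finset.mul_sum, Finset.sum_mul]
        exact Finset.sum_congr rfl fun u _ => Finset.sum_congr rfl fun ew _ => by ring

end Aux

theorem frontdoor_adjustment_functional
    {𝒰 EX EW EY 𝒳 𝒲 𝒴 : Type}
    [Fintype 𝒰] [Nonempty 𝒰] [Fintype EX] [Nonempty EX] [Fintype EW] [Nonempty EW]
    [Fintype EY] [Nonempty EY] [Fintype 𝒳] [Nonempty 𝒳] [Fintype 𝒲] [Nonempty 𝒲]
    [Fintype 𝒴] [Nonempty 𝒴]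
    (muU : PMF 𝒰) (muEX : PMF EX) (muEW : PMF EW) (muEY : PMF EY)
    (gX : 𝒰 × EX → 𝒳) (gW : 𝒳 × EW → 𝒲) (gY : 𝒲 × 𝒰 × EY → 𝒴)
    (hpos : ∀ (x' : 𝒳) (w : 𝒲),
      0 < (fdObs muU muEX muEW muEY gX gW gY).map (fun v => (v.1, v.2.1)) (x', w)) :
    ∀ (x : 𝒳) (y : 𝒴),
      fdDo muU muEW muEY gW gY x y =
        ∑ w : 𝒲,
          ((fdObs muU muEX muEW muEY gX gW gY).map (fun v => (v.1, v.2.1)) (x, w)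
            / (fdObs muU muEX muEW muEY gX gW gY).map (fun v => v.1) x) *
          ∑ x' : 𝒳,
            ((fdObs muU muEX muEW muEY gX gW gY) (x', w, y)
              / (fdObs muU muEX muEW muEY gX gW gY).map (fun v => (v.1, v.2.1)) (x', w)) *
            (fdObs muU muEX muEW muEY gX gW gY).map (fun v => v.1) x' := by
  intro x y
  classical
  -- basic bounds
  have hq_le : ∀ (x' : 𝒳) (w : 𝒲), fdq muEW gW x' w ≤ 1 := by
    intro x' w
    unfold fdq
    calc (∑ ew, muEW ew * (if w = gW (x', ew) then (1:ℝ≥0∞) else 0)) ≤ ∑ ew, muEW ew :=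
          Finset.sum_le_sum fun ew _ => by
            by_cases h : w = gW (x', ew) <;> simp [h]
      _ = 1 := fdsum_EW muEW
  have haX_le : ∀ (u : 𝒰) (x' : 𝒳), fdaX muEX gX u x' ≤ 1 := by
    intro u x'
    unfold fdaX
    calc (∑ ex, muEX ex * (if x' = gX (u, ex) then (1:ℝ≥0∞) else 0)) ≤ ∑ ex, muEX ex :=
          Finset.sum_le_sum fun ex _ => by
            by_cases h : x' = gX (u, ex) <;> simp [h]
      _ = 1 := by rw [← tsum_fintype (L := .unconditional _)]; exact muEX.tsum_coe
  have hA_le : ∀ x' : 𝒳, fdA muU muEX gX x' ≤ 1 := by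
    intro x'
    unfold fdA
    calc (∑ u, muU u * fdaX muEX gX u x') ≤ ∑ u, muU u :=
          Finset.sum_le_sum fun u _ => mul_le_of_le_one_right zero_le (haX_le u x')
      _ = 1 := by rw [← tsum_fintype (L := .unconditional _)]; exact muU.tsum_coe
  have hA_top : ∀ x' : 𝒳, fdA muU muEX gX x' ≠ ⊤ :=
    fun x' => ((hA_le x').trans_lt ENNReal.one_lt_top).ne
  have hq_top : ∀ (x' : 𝒳) (w : 𝒲), fdq muEW gW x' w ≠ ⊤ :=
    fun x' w => ((hq_le x' w).trans_lt ENNReal.one_lt_top).ne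
  have hprod : ∀ (x' : 𝒳) (w : 𝒲), fdA muU muEX gX x' ≠ 0 ∧ fdq muEW gW x' w ≠ 0 := by
    intro x' w
    have := hpos x' w
    rw [fdObsXW_apply] at this
    exact mul_ne_zero_iff.mp (pos_iff_ne_zero.mp this)
  have hA0 : ∀ x' : 𝒳, fdA muU muEX gX x' ≠ 0 :=
    fun x' => (hprod x' (Classical.arbitrary 𝒲)).1
  have hq0 : ∀ (x' : 𝒳) (w : 𝒲), fdq muEW gW x' w ≠ 0 := fun x' w => (hprod x' w).2
  -- simplify each summand
  have hterm : ∀ (w : 𝒲) (x' : 𝒳),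
      ((fdObs muU muEX muEW muEY gX gW gY) (x', w, y)
        / (fdObs muU muEX muEW muEY gX gW gY).map (fun v => (v.1, v.2.1)) (x', w))
        * (fdObs muU muEX muEW muEY gX gW gY).map (fun v => v.1) x'
      = fdT muU muEX muEY gX gY x' w y := by
    intro w x'
    rw [fdObs_apply, fdObsXW_apply, fdObsX_apply, mul_comm (fdA muU muEX gX x'),
      ENNReal.mul_div_mul_left _ _ (hq0 x' w) (hq_top x' w),
      ENNReal.div_mul_cancel (hA0 x') (hA_top x')]
  have hcoef : ∀ w : 𝒲,
      ((fdObs muU muEX muEW muEY gX gW gY).map (fun v => (v.1, v.2.1)) (x, w)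
        / (fdObs muU muEX muEW muEY gX gW gY).map (fun v => v.1) x)
      = fdq muEW gW x w := by
    intro w
    rw [fdObsXW_apply, fdObsX_apply, mul_comm, mul_div_assoc,
      ENNReal.div_self (hA0 x) (hA_top x), mul_one]
  have hT : ∀ w : 𝒲, (∑ x', fdT muU muEX muEY gX gY x' w y)
      = ∑ u, muU u * fdr muEY gY w u y := by
    intro w
    unfold fdT
    rw [Finset.sum_comm]
    refine Finset.sum_congr rfl fun u _ => ?_
    calc (∑ x', muU u * fdaX muEX gX u x' * fdr muEY gY w u y)
        = (∑ x', fdaX muEX gX u x') * (muU u * fdr muEY gY w u y) := by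
          rw [Finset.sum_mul]
          exact Finset.sum_congr rfl fun x' _ => by ring
      _ = muU u * fdr muEY gY w u y := by rw [fdsum_aX]; ring
  calc fdDo muU muEW muEY gW gY x y
      = ∑ w, fdq muEW gW x w * ∑ u, muU u * fdr muEY gY w u y :=
        fdDo_apply muU muEW muEY gW gY x y
    _ = _ := by
        refine Finset.sum_congr rfl fun w _ => ?_
        rw [hcoef w, Finset.sum_congr rfl fun x' _ => hterm w x', hT w]
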